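/- arXiv:1905.04106 — 8 statements merged into one kernel-verified Lean document; each statement's English description precedes it below -/
import Mathlib

section
/- Every maximal independent set in a complete bipartite graph is robust: if M is a maximal independent set of the complete bipartite graph K_{V1,V2} (with V1, V2 nonempty), then M is a maximal independent set of every connected spanning subgraph. -/
open SimpleGraph

variable {V : Type*}

/-- `S` is an independent set in `G`: no two vertices of `S` are adjacent. -/
def Indep (G : SimpleGraph V) (S : Set V) : Prop :=
  ∀ u ∈ S, ∀ v ∈ S, ¬ G.Adj u v

/-- `M` is a maximal independent set of `G` (maximal for inclusion). -/
def IsMIS (G : SimpleGraph V) (M : Set V) : Prop :=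
  Indep G M ∧ ∀ S : Set V, Indep G S → M ⊆ S → S = M

/-- `M` is robust in `G`: it is a maximal independent set of every
connected spanning subgraph of `G`. -/
def RobustMIS (G : SimpleGraph V) (M : Set V) : Prop :=
  ∀ H : SimpleGraph V, H ≤ G → H.Connected → IsMIS H M

/-- A pendant vertex: a vertex with exactly one neighbor. -/
def Pendant (G : SimpleGraph V) (v : V) : Prop :=
  ∃! w, G.Adj v w

/-- `v` lies on a cycle of `G`. -/
def OnCycle (G : SimpleGraph V) (v : V) : Prop :=
  ∃ p : G.Walk v v, p.IsCycle

/-- `v` has at least one pendant neighbor. -/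
def HasPendantNeighbor (G : SimpleGraph V) (v : V) : Prop :=
  ∃ w, G.Adj v w ∧ Pendant G w

/-- A sputnik graph: every vertex on a cycle has a pendant neighbor. -/
def Sputnik (G : SimpleGraph V) : Prop :=
  ∀ v, OnCycle G v → HasPendantNeighbor G v

/-- `G` is a complete bipartite graph with parts `V1`, `V2`. -/
def IsCompleteBipartiteWith (G : SimpleGraph V) (V1 V2 : Set V) : Prop :=
  (∀ v, v ∈ V1 ↔ v ∉ V2) ∧
    (∀ u v, G.Adj u v ↔ ((u ∈ V1 ∧ v ∈ V2) ∨ (u ∈ V2 ∧ v ∈ V1)))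

/-- `G` is a complete bipartite graph. -/
def IsCompleteBipartite (G : SimpleGraph V) : Prop :=
  ∃ V1 V2 : Set V, IsCompleteBipartiteWith G V1 V2

/-- `G` is biconnected: at least three vertices, and removing any
single vertex leaves it connected. -/
def Biconnected (G : SimpleGraph V) : Prop :=
  3 ≤ Nat.card V ∧ ∀ w : V, (G.induce {v | v ≠ w}).Connected

theorem stmt_2 (G : SimpleGraph V) (V1 V2 : Set V)
    (hG : IsCompleteBipartiteWith G V1 V2) (h1 : V1.Nonempty) (h2 : V2.Nonempty)
    (M : Set V) (hM : IsMIS G M) : RobustMIS G M := by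
  obtain ⟨hpart, hadj⟩ := hG
  obtain ⟨hMind, hMmax⟩ := hM
  -- helper: in a connected graph with two distinct vertices, every vertex has a neighbor
  have nbr : ∀ (H : SimpleGraph V), H.Connected → ∀ v u : V, v ≠ u →
      ∃ w, H.Adj v w := by
    intro H hH v u hvu
    obtain ⟨p⟩ := hH.preconnected v u
    cases p with
    | nil => exact absurd rfl hvu
    | cons h q => exact ⟨_, h⟩
  -- V1 and V2 are independent in G
  have hV1ind : Indep G V1 := by
    intro a ha b hb hab
    rcases (hadj a b).1 hab with ⟨_, hb2⟩ | ⟨ha2, _⟩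
    · exact (hpart b).1 hb hb2
    · exact (hpart a).1 ha ha2
  have hV2ind : Indep G V2 := by
    intro a ha b hb hab
    rcases (hadj a b).1 hab with ⟨ha1, _⟩ | ⟨_, hb1⟩
    · exact (hpart a).1 ha1 ha
    · exact (hpart b).1 hb1 hb
  -- M = V1 or M = V2
  have hMeq : M = V1 ∨ M = V2 := by
    by_cases hc : ∃ v ∈ M, v ∈ V2
    · right
      obtain ⟨v, hvM, hv2⟩ := hc
      have hsub : M ⊆ V2 := by
        intro u huM
        by_contra hu2
        have hu1 : u ∈ V1 := (hpart u).2 hu2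
        exact hMind u huM v hvM ((hadj u v).2 (Or.inl ⟨hu1, hv2⟩))
      exact (hMmax V2 hV2ind hsub).symm
    · left
      have hsub : M ⊆ V1 := by
        intro u huM
        exact (hpart u).2 fun hu2 => hc ⟨u, huM, hu2⟩
      exact (hMmax V1 hV1ind hsub).symm
  intro H hHG hHconn
  -- generic argument for when M is one of the two parts
  have main : ∀ A B : Set V, (∀ v, v ∈ A ↔ v ∉ B) →
      (∀ u v, G.Adj u v ↔ ((u ∈ A ∧ v ∈ B) ∨ (u ∈ B ∧ v ∈ A))) →
      A.Nonempty → Indep G A → IsMIS H A := by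
    intro A B hp ha hAne hAind
    constructor
    · intro u hu v hv huv
      exact hAind u hu v hv (hHG huv)
    · intro S hS hAS
      apply Set.Subset.antisymm _ hAS
      intro v hvS
      by_contra hvA
      have hvB : v ∈ B := by by_contra h; exact hvA ((hp v).2 h)
      obtain ⟨u, huA⟩ := hAne
      have hvu : v ≠ u := fun h => hvA (h ▸ huA)
      obtain ⟨w, hvw⟩ := nbr H hHconn v u hvu
      have hGvw : G.Adj v w := hHG hvw
      have hwA : w ∈ A := by
        rcases (ha v w).1 hGvw with ⟨hv1, _⟩ | ⟨_, hw1⟩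
        · exact absurd hvB ((hp v).1 hv1)
        · exact hw1
      exact hS v hvS w (hAS hwA) hvw
  rcases hMeq with hMe | hMe
  · rw [hMe]; exact main V1 V2 hpart hadj h1 hV1ind
  · rw [hMe]
    exact main V2 V1 (fun v => ⟨fun hv2 hv1 => (hpart v).1 hv1 hv2,
      fun h => by by_contra hc; exact h ((hpart v).2 hc)⟩)
      (fun u v => (hadj u v).trans or_comm) h2 hV2ind
end

section
/- Every maximal independent set in a sputnik graph is robust: if G is a connected graph in which every vertex lying on a cycle has at least one pendant neighbor, then every maximal independent set of G remains maximal and independent in every connected spanning subgraph of G. -/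
open SimpleGraph

variable {V : Type*}

lemma exists_nbr_of_not_mem {G : SimpleGraph V} {M : Set V} (hM : IsMIS G M)
    {v : V} (hv : v ∉ M) : ∃ u ∈ M, G.Adj v u := by
  by_contra h
  push_neg at h
  have hind : Indep G (insert v M) := by
    intro a ha b hb hab
    rcases Set.mem_insert_iff.1 ha with rfl | haM
    · rcases Set.mem_insert_iff.1 hb with rfl | hbM
      · exact G.irrefl hab
      · exact h b hbM hab
    · rcases Set.mem_insert_iff.1 hb with rfl | hbM
      · exact h a haM hab.symm
      · exact hM.1 a haM b hbM hab
  have := hM.2 (insert v M) hind (Set.subset_insert _ _)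
  exact hv (this ▸ Set.mem_insert v M)

theorem stmt_4 (G : SimpleGraph V) (hconn : G.Connected) (hS : Sputnik G)
    (M : Set V) (hM : IsMIS G M) : RobustMIS G M := by
  classical
  intro H hHG hHconn
  refine ⟨fun u hu v hv hadj => hM.1 u hu v hv (hHG hadj), ?_⟩
  intro S hSind hMS
  refine Set.Subset.antisymm ?_ hMS
  intro v hvS
  by_contra hvM
  obtain ⟨u, huM, hvu⟩ := exists_nbr_of_not_mem hM hvM
  by_cases hH : H.Adj v u
  · exact hSind v hvS u (hMS huM) hH
  · -- v lies on a cycle of G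
    obtain ⟨p0⟩ := hHconn.preconnected u v
    have hOnCycle : OnCycle G v := by
      refine ⟨Walk.cons hvu ((p0.mapLe hHG).toPath : G.Walk u v), ?_⟩
      apply SimpleGraph.Path.cons_isCycle
      intro he
      have he' : s(v, u) ∈ (p0.mapLe hHG).edges :=
        Walk.edges_toPath_subset _ he
      have he'' : s(v, u) ∈ p0.edges := by
        simp only [Walk.mapLe, Walk.edges_map, List.mem_map] at he'
        obtain ⟨e, heE, hemap⟩ := he'
        have : e = s(v, u) := by
          rw [← hemap]
          induction e with
          | h a b => rfl
        exact this ▸ heE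
      exact hH (p0.adj_of_mem_edges he'')
    obtain ⟨w, hvw, x0, hx0, hxuniq⟩ := hS v hOnCycle
    have huniq : ∀ x, G.Adj w x → x = v := by
      intro x hx
      rw [hxuniq x hx, ← hxuniq v hvw.symm]
    by_cases hwM : w ∈ M
    · -- the pendant edge vw must be in H
      have hne : w ≠ v := hvw.ne'
      obtain ⟨p1⟩ := hHconn.preconnected w v
      have hHwv : H.Adj w v := by
        cases p1 with
        | nil => exact absurd rfl hne
        | cons h' rest =>
          have := huniq _ (hHG h')
          exact this ▸ h'
      exact hSind v hvS w (hMS hwM) hHwv.symm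
    · obtain ⟨m, hmM, hwm⟩ := exists_nbr_of_not_mem hM hwM
      exact hvM ((huniq m hwm) ▸ hmM)
end

section
/- If G is a connected graph such that every maximal independent set of G is robust, and G is not a sputnik, then G is a complete bipartite graph. -/
open SimpleGraph

variable {V : Type*}

/-- The graph `G` with all edges at `x` removed. -/
def avoid (G : SimpleGraph V) (x : V) : SimpleGraph V where
  Adj a b := G.Adj a b ∧ a ≠ x ∧ b ≠ x
  symm := ⟨by rintro a b ⟨h, ha, hb⟩; exact ⟨h.symm, hb, ha⟩⟩
  loopless := ⟨by rintro a ⟨h, _, _⟩; exact G.loopless.irrefl a h⟩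

lemma avoid_le (G : SimpleGraph V) (x : V) : avoid G x ≤ G := fun _ _ h => h.1

lemma walk_avoid_ne {G : SimpleGraph V} {x p u : V} (w : (avoid G x).Walk p u) :
    p ≠ x → u ≠ x := by
  induction w with
  | nil => exact id
  | cons h _ ih => exact fun _ => ih h.2.2

lemma reach_avoid_ne {G : SimpleGraph V} {x p u : V} (h : (avoid G x).Reachable p u)
    (hp : p ≠ x) : u ≠ x := by
  obtain ⟨w⟩ := h
  exact walk_avoid_ne w hp

lemma reach_avoid_of_walk {G : SimpleGraph V} {x u v : V} (w : G.Walk u v) :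
    x ∉ w.support → (avoid G x).Reachable u v := by
  induction w with
  | nil => exact fun _ => Reachable.refl _
  | @cons a b c h p ih =>
    intro hx
    rw [SimpleGraph.Walk.support_cons, List.mem_cons] at hx
    push_neg at hx
    exact (SimpleGraph.Adj.reachable
      (⟨h, Ne.symm hx.1, fun hb => hx.2 (hb ▸ p.start_mem_support)⟩ : (avoid G x).Adj a b)).trans
      (ih hx.2)

lemma reach_to_nbr {G : SimpleGraph V} {x v : V} (w : G.Walk v x) :
    v ≠ x → ∃ a, G.Adj x a ∧ (avoid G x).Reachable v a := by
  induction w with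
  | nil => exact fun hv => absurd rfl hv
  | @cons u b c h p ih =>
    intro hu
    by_cases hb : b = c
    · subst hb; exact ⟨u, h.symm, Reachable.refl u⟩
    · obtain ⟨a, ha, hr⟩ := ih hb
      exact ⟨a, ha, (SimpleGraph.Adj.reachable (⟨h, hu, hb⟩ : (avoid G c).Adj u b)).trans hr⟩

lemma exists_MIS (G : SimpleGraph V) (S : Set V) (hS : Indep G S) :
    ∃ M, IsMIS G M ∧ S ⊆ M := by
  have hch : ∀ c ⊆ {T : Set V | Indep G T}, IsChain (· ⊆ ·) c → c.Nonempty →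
      ∃ ub ∈ {T : Set V | Indep G T}, ∀ s ∈ c, s ⊆ ub := by
    intro c hcS hchain hcne
    refine ⟨⋃₀ c, ?_, fun s hs => Set.subset_sUnion_of_mem hs⟩
    intro u hu v hv hadj
    obtain ⟨T1, hT1, hu⟩ := hu
    obtain ⟨T2, hT2, hv⟩ := hv
    rcases hchain.total hT1 hT2 with h | h
    · exact hcS hT2 u (h hu) v hv hadj
    · exact hcS hT1 u hu v (h hv) hadj
  obtain ⟨M, hSM, hmax⟩ := zorn_subset_nonempty {T : Set V | Indep G T} hch S hS
  exact ⟨M, ⟨hmax.1, fun T hT hMT => Set.Subset.antisymm (hmax.2 hT hMT) hMT⟩, hSM⟩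

lemma weapon (G : SimpleGraph V) (hconn : G.Connected)
    (hrob : ∀ M : Set V, IsMIS G M → RobustMIS G M) (x : V) (M : Set V) (hM : IsMIS G M)
    (hx : x ∉ M)
    (hdom : ∀ v, v ≠ x → ∃ a, G.Adj x a ∧ a ∉ M ∧ (avoid G x).Reachable v a) : False := by
  classical
  set H : SimpleGraph V :=
    { Adj := fun u w => G.Adj u w ∧ ¬(u = x ∧ w ∈ M) ∧ ¬(w = x ∧ u ∈ M)
      symm := ⟨by rintro a b ⟨h, ha, hb⟩; exact ⟨h.symm, hb, ha⟩⟩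
      loopless := ⟨by rintro a ⟨h, _, _⟩; exact G.loopless.irrefl a h⟩ } with hHdef
  have hHle : H ≤ G := fun _ _ h => h.1
  have havoidH : avoid G x ≤ H := by
    rintro a b ⟨h, ha, hb⟩
    exact ⟨h, fun hc => ha hc.1, fun hc => hb hc.1⟩
  have hreach : ∀ v, H.Reachable v x := by
    intro v
    by_cases hv : v = x
    · rw [hv]
    · obtain ⟨a, hxa, haM, hr⟩ := hdom v hv
      have h1 : H.Reachable v a := hr.mono havoidH
      have h2 : H.Adj a x :=
        ⟨hxa.symm, fun hc => hxa.ne' hc.1, fun hc => haM hc.2⟩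
      exact h1.trans h2.reachable
  have hHconn : H.Connected := by
    rw [connected_iff]
    exact ⟨fun u v => (hreach u).trans (hreach v).symm, hconn.nonempty⟩
  obtain ⟨hHind, hHmax⟩ := hrob M hM H hHle hHconn
  have hunion : M ∪ {x} = M := by
    apply hHmax (M ∪ {x}) ?_ Set.subset_union_left
    rintro u hu v hv hadj
    rcases hu with hu | hu <;> rcases hv with hv | hv
    · exact hM.1 u hu v hv (hHle hadj)
    · rw [Set.mem_singleton_iff] at hv; subst hv; exact hadj.2.2 ⟨rfl, hu⟩
    · rw [Set.mem_singleton_iff] at hu; subst hu; exact hadj.2.1 ⟨rfl, hv⟩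
    · rw [Set.mem_singleton_iff] at hu hv; subst hu; subst hv; exact H.loopless.irrefl v hadj
  exact hx (hunion ▸ Set.mem_union_right M (Set.mem_singleton x))
lemma phaseA_core (G : SimpleGraph V) (hconn : G.Connected)
    (hrob : ∀ M : Set V, IsMIS G M → RobustMIS G M) (x p : V)
    (hA : ∀ a, G.Adj x a → ∃ t, G.Adj a t ∧ t ≠ x)
    (hp : G.Adj x p) (S₀ : Set V) (hind : Indep G S₀)
    (hcomp : ∀ s ∈ S₀, (avoid G x).Reachable p s)
    (hS₀A : ∃ α ∈ S₀, G.Adj x α)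
    (hexcl : ∃ q' s, s ∈ S₀ ∧ G.Adj q' s ∧ G.Adj x q' ∧ (avoid G x).Reachable p q') :
    False := by
  classical
  have hpx : p ≠ x := hp.ne'
  set Gx := avoid G x with hGxdef
  set K := Gx.connectedComponentMk p with hKdef
  -- choice of a second neighbour for each neighbour of x
  let tf : V → V := fun a => if h : ∃ t, G.Adj a t ∧ t ≠ x then h.choose else x
  have tf_spec : ∀ a, G.Adj x a → G.Adj a (tf a) ∧ tf a ≠ x := by
    intro a ha
    have h := hA a ha
    simp only [tf, dif_pos h]
    exact h.choose_spec
  -- choice of a neighbour of x in each component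
  let af : Gx.ConnectedComponent → V := fun c =>
    if h : ∃ a, G.Adj x a ∧ Gx.connectedComponentMk a = c then h.choose else x
  have af_spec : ∀ c, (∃ a, G.Adj x a ∧ Gx.connectedComponentMk a = c) →
      G.Adj x (af c) ∧ Gx.connectedComponentMk (af c) = c := by
    intro c h
    simp only [af, dif_pos h]
    exact h.choose_spec
  -- the seed set
  set E : Set V := {w | ∃ c : Gx.ConnectedComponent, c ≠ K ∧
      (∃ a, G.Adj x a ∧ Gx.connectedComponentMk a = c) ∧ w = tf (af c)} with hEdef
  -- basic facts about elements of E
  have hE_fact : ∀ c : Gx.ConnectedComponent, c ≠ K →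
      (∃ a, G.Adj x a ∧ Gx.connectedComponentMk a = c) →
      G.Adj (af c) (tf (af c)) ∧ tf (af c) ≠ x ∧ af c ≠ x ∧
        Gx.connectedComponentMk (tf (af c)) = c ∧ G.Adj x (af c) := by
    intro c hcK hc
    obtain ⟨hxa, hmk⟩ := af_spec c hc
    obtain ⟨hadj, htx⟩ := tf_spec (af c) hxa
    have hax : af c ≠ x := hxa.ne'
    have hGxadj : Gx.Adj (af c) (tf (af c)) := ⟨hadj, hax, htx⟩
    have : Gx.connectedComponentMk (tf (af c)) = c :=
      (ConnectedComponent.connectedComponentMk_eq_of_adj hGxadj).symm.trans hmk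
    exact ⟨hadj, htx, hax, this, hxa⟩
  have hS₀fact : ∀ s ∈ S₀, s ≠ x ∧ Gx.connectedComponentMk s = K := by
    intro s hs
    refine ⟨reach_avoid_ne (hcomp s hs) hpx, ?_⟩
    exact (ConnectedComponent.sound (hcomp s hs)).symm
  -- the union seed is independent
  have hSind : Indep G (S₀ ∪ E) := by
    intro u hu v hv hadj
    have hmkadj : ∀ a b : V, a ≠ x → b ≠ x → G.Adj a b →
        Gx.connectedComponentMk a = Gx.connectedComponentMk b := by
      intro a b ha hb hab
      exact ConnectedComponent.connectedComponentMk_eq_of_adj (⟨hab, ha, hb⟩ : Gx.Adj a b)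
    rcases hu with hu | hu <;> rcases hv with hv | hv
    · exact hind u hu v hv hadj
    · obtain ⟨c, hcK, hc, rfl⟩ := hv
      obtain ⟨-, htx, -, hmk, -⟩ := hE_fact c hcK hc
      obtain ⟨hux, huK⟩ := hS₀fact u hu
      exact hcK ((hmk.symm.trans (hmkadj u _ hux htx hadj).symm).trans huK)
    · obtain ⟨c, hcK, hc, rfl⟩ := hu
      obtain ⟨-, htx, -, hmk, -⟩ := hE_fact c hcK hc
      obtain ⟨hvx, hvK⟩ := hS₀fact v hv
      exact hcK ((hmk.symm.trans (hmkadj _ v htx hvx hadj)).trans hvK)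
    · obtain ⟨c, hcK, hc, rfl⟩ := hu
      obtain ⟨d, hdK, hd, rfl⟩ := hv
      obtain ⟨-, htx, -, hmk, -⟩ := hE_fact c hcK hc
      obtain ⟨-, htx', -, hmk', -⟩ := hE_fact d hdK hd
      have hcd : c = d := (hmk.symm.trans (hmkadj _ _ htx htx' hadj)).trans hmk'
      subst hcd
      exact G.loopless.irrefl _ hadj
  obtain ⟨M, hM, hSM⟩ := exists_MIS G (S₀ ∪ E) hSind
  have hxM : x ∉ M := by
    obtain ⟨α, hα, hxα⟩ := hS₀A
    intro hxmem
    exact hM.1 x hxmem α (hSM (Or.inl hα)) hxα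
  apply weapon G hconn hrob x M hM hxM
  intro v hv
  obtain ⟨w⟩ := hconn.preconnected v x
  obtain ⟨a, hxa, hra⟩ := reach_to_nbr w hv
  by_cases hc : Gx.connectedComponentMk a = K
  · obtain ⟨q', s, hsS, hq's, hxq', hpq'⟩ := hexcl
    have hq'M : q' ∉ M := fun h => hM.1 q' h s (hSM (Or.inl hsS)) hq's
    have h1 : Gx.Reachable a p := ConnectedComponent.exact hc
    exact ⟨q', hxq', hq'M, (hra.trans h1).trans hpq'⟩
  · have hgood : ∃ a', G.Adj x a' ∧ Gx.connectedComponentMk a' = Gx.connectedComponentMk a :=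
      ⟨a, hxa, rfl⟩
    obtain ⟨hadj, htx, hax, hmk, hxaf⟩ := hE_fact (Gx.connectedComponentMk a) hc hgood
    have htE : tf (af (Gx.connectedComponentMk a)) ∈ E :=
      ⟨Gx.connectedComponentMk a, hc, hgood, rfl⟩
    have haf_not : af (Gx.connectedComponentMk a) ∉ M := fun h =>
      hM.1 _ h _ (hSM (Or.inr htE)) hadj
    have h2 : Gx.Reachable a (af (Gx.connectedComponentMk a)) := by
      apply ConnectedComponent.exact
      rw [(af_spec _ hgood).2]
    exact ⟨af (Gx.connectedComponentMk a), hxaf, haf_not, hra.trans h2⟩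
lemma phaseA (G : SimpleGraph V) (hconn : G.Connected)
    (hrob : ∀ M : Set V, IsMIS G M → RobustMIS G M) (x p q : V)
    (hA : ∀ a, G.Adj x a → ∃ t, G.Adj a t ∧ t ≠ x)
    (hp : G.Adj x p) (hq : G.Adj x q)
    (hre : (avoid G x).Reachable p q) :
    ¬G.Adj p q ∧ ∀ s, G.Adj q s → s ≠ x → G.Adj p s ∧ ¬G.Adj x s := by
  have hqx : q ≠ x := hq.ne'
  constructor
  · intro hadj
    apply phaseA_core G hconn hrob x p hA hp {p} ?_ ?_ ⟨p, rfl, hp⟩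
      ⟨q, p, rfl, hadj.symm, hq, hre⟩
    · intro u hu v hv
      rw [Set.mem_singleton_iff] at hu hv
      rw [hu, hv]
      exact G.loopless.irrefl p
    · intro s hs
      rw [Set.mem_singleton_iff] at hs
      rw [hs]
  · intro s hqs hsx
    have hrs : (avoid G x).Reachable p s :=
      hre.trans (SimpleGraph.Adj.reachable (⟨hqs, hqx, hsx⟩ : (avoid G x).Adj q s))
    have hps : G.Adj p s := by
      by_contra hns
      apply phaseA_core G hconn hrob x p hA hp {p, s} ?_ ?_ ⟨p, Or.inl rfl, hp⟩
        ⟨q, s, Or.inr rfl, hqs, hq, hre⟩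
      · intro u hu v hv
        simp only [Set.mem_insert_iff, Set.mem_singleton_iff] at hu hv
        rcases hu with hu | hu <;> rcases hv with hv | hv <;> rw [hu, hv]
        · exact G.loopless.irrefl p
        · exact hns
        · exact fun h => hns h.symm
        · exact G.loopless.irrefl s
      · intro u hu
        simp only [Set.mem_insert_iff, Set.mem_singleton_iff] at hu
        rcases hu with hu | hu <;> rw [hu]
        · exact hrs
    refine ⟨hps, ?_⟩
    intro hxs
    apply phaseA_core G hconn hrob x p hA hp {q} ?_ ?_ ⟨q, rfl, hq⟩
      ⟨s, q, rfl, hqs.symm, hxs, hrs⟩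
    · intro u hu v hv
      rw [Set.mem_singleton_iff] at hu hv
      rw [hu, hv]
      exact G.loopless.irrefl q
    · intro u hu
      rw [Set.mem_singleton_iff] at hu
      rw [hu]
      exact hre

lemma path_decomp {G : SimpleGraph V} {x y : V} (r : G.Walk x y) (hr : r.IsPath)
    (hl : 2 ≤ r.length) : ∃ z, G.Adj x z ∧ z ≠ y ∧ (avoid G x).Reachable z y := by
  cases r with
  | nil => simp at hl
  | @cons _ z _ h2 r' =>
    have hr'p : r'.IsPath := hr.of_cons
    have hxsup : x ∉ r'.support := by
      have hnd := hr.2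
      rw [SimpleGraph.Walk.support_cons, List.nodup_cons] at hnd
      exact hnd.1
    refine ⟨z, h2, ?_, reach_avoid_of_walk r' hxsup⟩
    intro he
    subst he
    have hnil : r' = SimpleGraph.Walk.nil := SimpleGraph.Walk.isPath_iff_eq_nil.mp hr'p
    rw [SimpleGraph.Walk.length_cons, hnil] at hl
    simp at hl

lemma cycle_pair (G : SimpleGraph V) {x : V} (h : OnCycle G x) :
    ∃ y z, G.Adj x y ∧ G.Adj x z ∧ y ≠ z ∧ (avoid G x).Reachable y z := by
  obtain ⟨w, hw⟩ := h
  cases w with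
  | nil => exact absurd hw SimpleGraph.Walk.IsCycle.not_of_nil
  | @cons _ y _ h1 q =>
    have hq : q.IsPath := ((SimpleGraph.Walk.cons_isCycle_iff q h1).mp hw).1
    have hlen : 3 ≤ (SimpleGraph.Walk.cons h1 q).length := hw.three_le_length
    rw [SimpleGraph.Walk.length_cons] at hlen
    have hrl : 2 ≤ q.reverse.length := by
      rw [SimpleGraph.Walk.length_reverse]; omega
    obtain ⟨z, h2, hzy, hrzy⟩ := path_decomp q.reverse hq.reverse hrl
    exact ⟨y, z, h1, h2, Ne.symm hzy, hrzy.symm⟩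
lemma closure_aux {G : SimpleGraph V} {x y : V}
    (step : ∀ u b, G.Adj u b → (b = x ∨ G.Adj x b ∨ (G.Adj y b ∧ b ≠ x)) →
      (u = x ∨ G.Adj x u ∨ (G.Adj y u ∧ u ≠ x))) :
    ∀ {v : V}, G.Walk v x → (v = x ∨ G.Adj x v ∨ (G.Adj y v ∧ v ≠ x))
  | _, SimpleGraph.Walk.nil => Or.inl rfl
  | _, SimpleGraph.Walk.cons h w => step _ _ h (closure_aux step w)

theorem stmt_7 (G : SimpleGraph V) (hconn : G.Connected)
    (hrob : ∀ M : Set V, IsMIS G M → RobustMIS G M)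
    (hns : ¬ Sputnik G) : IsCompleteBipartite G := by
  classical
  rw [Sputnik] at hns
  push_neg at hns
  obtain ⟨x, hxcyc, hxnp⟩ := hns
  rw [HasPendantNeighbor] at hxnp
  push_neg at hxnp
  have hA : ∀ a, G.Adj x a → ∃ t, G.Adj a t ∧ t ≠ x := by
    intro a ha
    by_contra hc
    push_neg at hc
    exact hxnp a ha ⟨x, ha.symm, fun t ht => hc t ht⟩
  obtain ⟨y, z, hxy, hxz, hyz, hreyz⟩ := cycle_pair G hxcyc
  have hyx : y ≠ x := hxy.ne'
  have hzx : z ≠ x := hxz.ne'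
  have PA : ∀ p q, G.Adj x p → G.Adj x q → (avoid G x).Reachable p q →
      ¬G.Adj p q ∧ ∀ s, G.Adj q s → s ≠ x → G.Adj p s ∧ ¬G.Adj x s :=
    fun p q hp hq hre => phaseA G hconn hrob x p q hA hp hq hre
  have hzy : ∀ s, G.Adj y s → s ≠ x → G.Adj z s ∧ ¬G.Adj x s :=
    (PA z y hxz hxy hreyz.symm).2
  have hAy : ∀ s, G.Adj y s → ∃ t, G.Adj s t ∧ t ≠ y := by
    intro s hs
    by_cases hsx : s = x
    · rw [hsx]; exact ⟨z, hxz, Ne.symm hyz⟩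
    · obtain ⟨hzs, -⟩ := hzy s hs hsx
      exact ⟨z, hzs.symm, Ne.symm hyz⟩
  have hreyaux : ∀ t, G.Adj y t → t ≠ x → (avoid G y).Reachable t x := by
    intro t hyt htx
    obtain ⟨hzt, -⟩ := hzy t hyt htx
    have h1 : (avoid G y).Adj t z := ⟨hzt.symm, hyt.ne', Ne.symm hyz⟩
    have h2 : (avoid G y).Adj z x := ⟨hxz.symm, Ne.symm hyz, Ne.symm hyx⟩
    exact h1.reachable.trans h2.reachable
  have hBreach : ∀ a, G.Adj x a → (avoid G x).Reachable y a := by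
    intro a hxa
    by_contra hnr
    have hay : a ≠ y := fun h => hnr (by rw [h])
    obtain ⟨t₀, hyt₀, ht₀x⟩ := hA y hxy
    have h := (phaseA G hconn hrob y t₀ x hAy hyt₀ hxy.symm (hreyaux t₀ hyt₀ ht₀x)).2
    obtain ⟨ht₀a, -⟩ := h a hxa hay
    exact hnr ((SimpleGraph.Adj.reachable (⟨hyt₀, hyx, ht₀x⟩ : (avoid G x).Adj y t₀)).trans
      (SimpleGraph.Adj.reachable (⟨ht₀a, ht₀x, hxa.ne'⟩ : (avoid G x).Adj t₀ a)))
  have hpairs : ∀ a b, G.Adj x a → G.Adj x b →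
      ¬G.Adj a b ∧ ∀ s, G.Adj b s → s ≠ x → G.Adj a s ∧ ¬G.Adj x s :=
    fun a b hxa hxb => PA a b hxa hxb ((hBreach a hxa).symm.trans (hBreach b hxb))
  have hTfull : ∀ t, G.Adj y t → t ≠ x → ∀ a, G.Adj x a → G.Adj t a := by
    intro t hyt htx a hxa
    have h := (phaseA G hconn hrob y t x hAy hyt hxy.symm (hreyaux t hyt htx)).2
    by_cases hay : a = y
    · rw [hay]; exact hyt.symm
    · exact (h a hxa hay).1
  have hTN : ∀ t, G.Adj y t → t ≠ x → ∀ s, G.Adj t s → s ≠ y →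
      G.Adj x s ∧ ¬G.Adj y s := by
    intro t hyt htx s hts hsy
    have h := (phaseA G hconn hrob y x t hAy hxy.symm hyt (hreyaux t hyt htx).symm).2
    exact h s hts hsy
  have hX : ∀ v, v = x ∨ G.Adj x v ∨ (G.Adj y v ∧ v ≠ x) := by
    have step : ∀ u b, G.Adj u b → (b = x ∨ G.Adj x b ∨ (G.Adj y b ∧ b ≠ x)) →
        (u = x ∨ G.Adj x u ∨ (G.Adj y u ∧ u ≠ x)) := by
      intro u b hub hXb
      rcases hXb with rfl | hxb | ⟨hyb, hbx⟩
      · exact Or.inr (Or.inl hub.symm)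
      · by_cases hux : u = x
        · exact Or.inl hux
        · by_cases hby : b = y
          · refine Or.inr (Or.inr ⟨?_, hux⟩)
            rw [← hby]
            exact hub.symm
          · obtain ⟨hyu, -⟩ := (hpairs y b hxy hxb).2 u hub.symm hux
            exact Or.inr (Or.inr ⟨hyu, hux⟩)
      · by_cases huy : u = y
        · rw [huy]; exact Or.inr (Or.inl hxy)
        · obtain ⟨hxu, -⟩ := hTN b hyb hbx u hub.symm huy
          exact Or.inr (Or.inl hxu)
    intro v
    obtain ⟨w⟩ := hconn.preconnected v x
    exact closure_aux step w
  refine ⟨{v | v = x ∨ (G.Adj y v ∧ v ≠ x)}, {v | G.Adj x v}, ?_, ?_⟩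
  · intro v
    simp only [Set.mem_setOf_eq]
    constructor
    · rintro (h | ⟨hyv, hvx⟩)
      · rw [h]; exact fun hh => G.loopless.irrefl x hh
      · exact fun hh => (hzy v hyv hvx).2 hh
    · intro hnv
      rcases hX v with h | h | h
      · exact Or.inl h
      · exact absurd h hnv
      · exact Or.inr h
  · intro u v
    simp only [Set.mem_setOf_eq]
    constructor
    · intro huv
      rcases hX u with h | hxu | ⟨hyu, hux⟩
      · exact Or.inl ⟨Or.inl h, h ▸ huv⟩
      · refine Or.inr ⟨hxu, ?_⟩
        by_cases hvx : v = x
        · exact Or.inl hvx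
        · by_cases huy : u = y
          · refine Or.inr ⟨?_, hvx⟩
            rw [← huy]
            exact huv
          · exact Or.inr ⟨((hpairs y u hxy hxu).2 v huv hvx).1, hvx⟩
      · refine Or.inl ⟨Or.inr ⟨hyu, hux⟩, ?_⟩
        by_cases hvy : v = y
        · rw [hvy]; exact hxy
        · exact (hTN u hyu hux v huv hvy).1
    · rintro (⟨hu1, hv2⟩ | ⟨hu2, hv1⟩)
      · rcases hu1 with h | ⟨hyu, hux⟩
        · rw [h]; exact hv2
        · exact hTfull u hyu hux v hv2
      · rcases hv1 with h | ⟨hyv, hvx⟩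
        · rw [h]; exact hu2.symm
        · exact (hTfull v hyv hvx u hu2).symm
end

section
/- For a connected graph G, all maximal independent sets of G are robust if and only if G is a complete bipartite graph or a sputnik graph. -/
open SimpleGraph

variable {V : Type*}

section Infra

variable (G : SimpleGraph V)

lemma indep_mono {H G : SimpleGraph V} (hle : H ≤ G) {S : Set V} (h : Indep G S) :
    Indep H S := fun u hu v hv hadj => h u hu v hv (hle hadj)

/-- Zorn extension: an independent set T extends to an MIS avoiding X,
provided every element of X has a neighbor in T. -/
lemma exists_mis_ext (T X : Set V) (hT : Indep G T) (hTX : ∀ x ∈ X, x ∉ T)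
    (hdom : ∀ x ∈ X, ∃ t ∈ T, G.Adj x t) :
    ∃ M, IsMIS G M ∧ T ⊆ M ∧ ∀ x ∈ X, x ∉ M := by
  obtain ⟨M, hTM, hMmem, hMmax⟩ := zorn_subset_nonempty
      {S | Indep G S ∧ T ⊆ S ∧ ∀ x ∈ X, x ∉ S}
      (fun c hc hchain ⟨S0, hS0⟩ => by
        refine ⟨⋃₀ c, ⟨?_, ?_, ?_⟩, fun s hs => Set.subset_sUnion_of_mem hs⟩
        · intro u hu w hw hadj
          obtain ⟨Su, hSu, hu⟩ := hu
          obtain ⟨Sw, hSw, hw⟩ := hw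
          rcases hchain.total hSu hSw with h | h
          · exact (hc hSw).1 u (h hu) w hw hadj
          · exact (hc hSu).1 u hu w (h hw) hadj
        · exact (hc hS0).2.1.trans (Set.subset_sUnion_of_mem hS0)
        · intro x hx hmem
          obtain ⟨S, hS, hxS⟩ := hmem
          exact (hc hS).2.2 x hx hxS)
      T ⟨hT, subset_rfl, hTX⟩
  refine ⟨M, ⟨hMmem.1, ?_⟩, hMmem.2.1, hMmem.2.2⟩
  intro S hS hMS
  by_contra hne
  obtain ⟨w, hwS, hwM⟩ : ∃ w ∈ S, w ∉ M := by
    by_contra h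
    push_neg at h
    exact hne (Set.Subset.antisymm h hMS)
  by_cases hwX : w ∈ X
  · obtain ⟨t, htT, hadj⟩ := hdom w hwX
    exact hS w hwS t (hMS (hMmem.2.1 htT)) hadj
  · have hmem2 : insert w M ∈ {S | Indep G S ∧ T ⊆ S ∧ ∀ x ∈ X, x ∉ S} := by
      refine ⟨?_, hMmem.2.1.trans (Set.subset_insert _ _), ?_⟩
      · intro u hu x hx hadj
        rcases hu with rfl | hu <;> rcases hx with rfl | hx
        · exact G.loopless.irrefl _ hadj
        · exact hS _ hwS x (hMS hx) hadj
        · exact hS _ hwS u (hMS hu) hadj.symm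
        · exact hMmem.1 u hu x hx hadj
      · intro x hx hmem
        rcases hmem with rfl | hmem
        · exact hwX hx
        · exact hMmem.2.2 x hx hmem
    exact hwM (hMmax hmem2 (Set.subset_insert _ _) (Set.mem_insert w M))

lemma exists_mis (T : Set V) (hT : Indep G T) : ∃ M, IsMIS G M ∧ T ⊆ M := by
  obtain ⟨M, h1, h2, _⟩ := exists_mis_ext G T ∅ hT (by simp) (by simp)
  exact ⟨M, h1, h2⟩

lemma mis_dominates {M : Set V} (hM : IsMIS G M) {x : V} (hx : x ∉ M) :
    ∃ u ∈ M, G.Adj x u := by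
  by_contra h
  push_neg at h
  have hind : Indep G (insert x M) := by
    intro u hu w hw hadj
    rcases hu with rfl | hu <;> rcases hw with rfl | hw
    · exact G.loopless.irrefl _ hadj
    · exact h w hw hadj
    · exact h u hu hadj.symm
    · exact hM.1 u hu w hw hadj
  have := hM.2 _ hind (Set.subset_insert _ _)
  exact hx (this ▸ Set.mem_insert x M)

/-- `G` minus vertex `v`, as a graph on the same vertex set (v isolated). -/
def Gm (v : V) : SimpleGraph V where
  Adj x y := G.Adj x y ∧ x ≠ v ∧ y ≠ v
  symm := ⟨fun x y ⟨h, hx, hy⟩ => ⟨h.symm, hy, hx⟩⟩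
  loopless := ⟨fun x ⟨h, _, _⟩ => G.loopless.irrefl x h⟩

lemma Gm_le (v : V) : Gm G v ≤ G := fun _ _ h => h.1

lemma walk_avoid_reach {v x y : V} (p : G.Walk x y) (hv : v ∉ p.support) :
    (Gm G v).Reachable x y := by
  induction p with
  | nil => exact Reachable.refl _
  | cons h q ih =>
      rename_i a b c
      rw [Walk.support_cons, List.mem_cons] at hv
      push_neg at hv
      have hb : v ∉ q.support := hv.2
      have hadj : (Gm G v).Adj a b := ⟨h, fun hh => hv.1 hh.symm,
        fun hh => hb (hh ▸ q.start_mem_support)⟩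
      exact hadj.reachable.trans (ih hb)

/-- Delete all edges from `y` to `M`. -/
def delAt (y : V) (M : Set V) : SimpleGraph V :=
  G.deleteEdges {e | ∃ m ∈ M, e = s(y, m)}

lemma delAt_le (y : V) (M : Set V) : delAt G y M ≤ G := deleteEdges_le _

lemma delAt_adj {y : V} {M : Set V} {x z : V} :
    (delAt G y M).Adj x z ↔ G.Adj x z ∧ ¬(x = y ∧ z ∈ M) ∧ ¬(z = y ∧ x ∈ M) := by
  simp only [delAt, deleteEdges_adj, Set.mem_setOf_eq]
  constructor
  · rintro ⟨hadj, hne⟩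
    refine ⟨hadj, ?_, ?_⟩
    · rintro ⟨rfl, hz⟩; exact hne ⟨z, hz, rfl⟩
    · rintro ⟨rfl, hx⟩; exact hne ⟨x, hx, Sym2.eq_swap⟩
  · rintro ⟨hadj, h1, h2⟩
    refine ⟨hadj, ?_⟩
    rintro ⟨m, hm, he⟩
    rw [Sym2.eq_iff] at he
    rcases he with ⟨rfl, rfl⟩ | ⟨rfl, rfl⟩
    · exact h1 ⟨rfl, hm⟩
    · exact h2 ⟨rfl, hm⟩

lemma Gm_le_delAt (y : V) (M : Set V) : Gm G y ≤ delAt G y M := by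
  intro a b hab
  rw [delAt_adj]
  exact ⟨hab.1, fun h => hab.2.1 h.1, fun h => hab.2.2 h.1⟩

lemma delAt_connected (hconn : G.Connected) {y : V} {M : Set V}
    (hK : ∀ a, G.Adj y a → ∃ b, G.Adj y b ∧ b ∉ M ∧ (Gm G y).Reachable a b) :
    (delAt G y M).Connected := by
  have hadj_keep : ∀ b, G.Adj y b → b ∉ M → (delAt G y M).Adj y b := by
    intro b hadj hbM
    rw [delAt_adj]
    exact ⟨hadj, fun h => hbM h.2, fun h => (G.ne_of_adj hadj) h.1.symm⟩
  have hedge : ∀ a b, G.Adj a b → (delAt G y M).Reachable a b := by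
    intro a b hab
    by_cases hd : (delAt G y M).Adj a b
    · exact hd.reachable
    · have hcase : (a = y ∧ b ∈ M) ∨ (b = y ∧ a ∈ M) := by
        by_contra hcc
        push_neg at hcc
        exact hd ((delAt_adj G).mpr ⟨hab, fun h => hcc.1 h.1 h.2,
          fun h => hcc.2 h.1 h.2⟩)
      have key : ∀ m, G.Adj y m → (delAt G y M).Reachable y m := by
        intro m hm
        obtain ⟨b', hb'adj, hb'M, hreach⟩ := hK m hm
        exact ((hadj_keep b' hb'adj hb'M).reachable).trans
          (Reachable.mono (Gm_le_delAt G y M) hreach).symm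
      rcases hcase with ⟨rfl, _⟩ | ⟨rfl, _⟩
      · exact key b hab
      · exact (key a hab.symm).symm
  rw [connected_iff]
  refine ⟨fun u w => ?_, hconn.nonempty⟩
  obtain ⟨p⟩ := hconn.preconnected u w
  induction p with
  | nil => exact Reachable.refl _
  | cons h q ih => exact (hedge _ _ h).trans ih

end Infra

section Part2
variable (G : SimpleGraph V)

lemma viol (hrob : ∀ M : Set V, IsMIS G M → RobustMIS G M) (hconn : G.Connected)
    {M : Set V} (hM : IsMIS G M) {y : V} (hy : y ∉ M)
    (hK : ∀ a, G.Adj y a → ∃ b, G.Adj y b ∧ b ∉ M ∧ (Gm G y).Reachable a b) : False := by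
  have hc := delAt_connected G hconn hK
  have hmis := hrob M hM (delAt G y M) (delAt_le G y M) hc
  have hind : Indep (delAt G y M) (insert y M) := by
    intro u hu w hw hadj
    rw [delAt_adj] at hadj
    rcases hu with rfl | hu <;> rcases hw with rfl | hw
    · exact G.loopless.irrefl _ hadj.1
    · exact hadj.2.1 ⟨rfl, hw⟩
    · exact hadj.2.2 ⟨rfl, hu⟩
    · exact hM.1 u hu w hw hadj.1
  have := hmis.2 _ hind (Set.subset_insert _ _)
  exact hy (this ▸ Set.mem_insert y M)

lemma master (hrob : ∀ M : Set V, IsMIS G M → RobustMIS G M) (hconn : G.Connected)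
    (T X : Set V) (hT : Indep G T) (hTX : ∀ x ∈ X, x ∉ T)
    (hdom : ∀ x ∈ X, ∃ t ∈ T, G.Adj x t) {y : V} (hyX : y ∈ X)
    (hK : ∀ a, G.Adj y a → ∃ b, G.Adj y b ∧ b ∈ X ∧ (Gm G y).Reachable a b) : False := by
  obtain ⟨M, hM, _, hXM⟩ := exists_mis_ext G T X hT hTX hdom
  exact viol G hrob hconn hM (hXM y hyX)
    (fun a ha => by obtain ⟨b, h1, h2, h3⟩ := hK a ha; exact ⟨b, h1, hXM b h2, h3⟩)

lemma cycle_nbrs {v : V} (p : G.Walk v v) (hp : p.IsCycle) :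
    ∃ a₁ a₂, G.Adj v a₁ ∧ G.Adj v a₂ ∧ a₁ ≠ a₂ ∧ (Gm G v).Reachable a₁ a₂ := by
  have hlen := hp.three_le_length
  cases p with
  | nil => simp at hlen
  | @cons _ a₁ _ h q =>
    rw [Walk.cons_isCycle_iff] at hp
    obtain ⟨hqpath, hqe⟩ := hp
    have hrev : q.reverse.IsPath := hqpath.reverse
    have hne : v ≠ a₁ := (G.ne_of_adj h)
    obtain ⟨a₂, h₂, r, hqr⟩ := Walk.exists_eq_cons_of_ne hne q.reverse
    have hrpath : r.IsPath := by
      rw [hqr] at hrev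
      exact hrev.of_cons
    have hvr : v ∉ r.support := by
      rw [hqr] at hrev
      have := hrev.2
      rw [Walk.support_cons] at this
      exact (List.nodup_cons.mp this).1
    have hrlen : 1 ≤ r.length := by
      have : q.reverse.length = q.length := Walk.length_reverse q
      rw [hqr] at this
      rw [Walk.length_cons] at this
      rw [Walk.length_cons] at hlen
      omega
    have hne2 : a₂ ≠ a₁ := by
      rintro rfl
      have := (Walk.isPath_iff_eq_nil (p := r)).mp hrpath
      rw [this] at hrlen
      simp at hrlen
    exact ⟨a₂, a₁, h₂, h, hne2, walk_avoid_reach G r hvr⟩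

end Part2

section Backward
variable (G : SimpleGraph V)

lemma connected_first_edge {H : SimpleGraph V} (hc : H.Connected) {x w : V} (hne : w ≠ x) :
    ∃ z, H.Adj w z := by
  obtain ⟨p⟩ := hc.preconnected w x
  cases p with
  | nil => exact absurd rfl hne
  | @cons _ z _ h q => exact ⟨z, h⟩

lemma sputnik_robust (hconn : G.Connected) (hsp : ∀ v, OnCycle G v → HasPendantNeighbor G v)
    {M : Set V} (hM : IsMIS G M) : RobustMIS G M := by
  intro H hle hc
  refine ⟨indep_mono hle hM.1, ?_⟩
  intro S hS hMS
  by_contra hne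
  obtain ⟨x, hxS, hxM⟩ : ∃ x ∈ S, x ∉ M := by
    by_contra h
    push_neg at h
    exact hne (Set.Subset.antisymm h hMS)
  obtain ⟨u, huM, hxu⟩ := mis_dominates G hM hxM
  by_cases hH : H.Adj x u
  · exact hS x hxS u (hMS huM) hH
  · -- x is on a cycle of G
    haveI := Classical.decEq V
    obtain ⟨p0⟩ := hc.preconnected u x
    have hpath : (p0.toPath : H.Walk u x).IsPath := p0.toPath.2
    set p : H.Walk u x := (p0.toPath : H.Walk u x)
    have hPpath : (p.mapLe hle).IsPath := hpath.mapLe hle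
    have hedge : s(x, u) ∉ (p.mapLe hle).edges := by
      intro hmem
      have : s(x, u) ∈ p.edges := by
        have := Walk.edges_map (f := Hom.ofLE hle) (p := p)
        rw [Walk.mapLe] at hmem
        rw [this] at hmem
        simpa using hmem
      exact hH (p.adj_of_mem_edges this)
    have hcyc : OnCycle G x :=
      ⟨Walk.cons hxu (p.mapLe hle), (Walk.cons_isCycle_iff _ _).mpr ⟨hPpath, hedge⟩⟩
    obtain ⟨w, hxw, z, hz, huniq⟩ := hsp x hcyc
    by_cases hwM : w ∈ M
    · -- w pendant in M: its unique neighbor is x, and H keeps that edge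
      have hwx : w ≠ x := fun h => G.loopless.irrefl x (h ▸ hxw)
      obtain ⟨z₀, hz₀⟩ := connected_first_edge hc hwx
      have h1 : z₀ = z := huniq z₀ (hle hz₀)
      have h2 : x = z := huniq x hxw.symm
      have : H.Adj w x := by rw [h2, ← h1] at *; exact hz₀
      exact hS x hxS w (hMS hwM) this.symm
    · obtain ⟨m, hmM, hwm⟩ := mis_dominates G hM hwM
      have h1 : m = z := huniq m hwm
      have h2 : x = z := huniq x hxw.symm
      rw [← h2] at h1
      exact hxM (h1 ▸ hmM)

lemma cb_aux {H : SimpleGraph V} (hle : H ≤ G) (hc : H.Connected)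
    {V1 V2 : Set V} (hpart : ∀ w, w ∈ V1 ↔ w ∉ V2)
    (hadj : ∀ u w, G.Adj u w ↔ ((u ∈ V1 ∧ w ∈ V2) ∨ (u ∈ V2 ∧ w ∈ V1)))
    {M S : Set V} (hM : IsMIS G M) (hS : Indep H S) (hMS : M ⊆ S)
    {x u : V} (hxS : x ∈ S) (hxM : x ∉ M) (huM : u ∈ M) (hxu : G.Adj x u)
    (hx1 : x ∈ V1) (hu2 : u ∈ V2) : False := by
  have hMV2 : M ⊆ V2 := by
    intro m hm
    by_contra h2
    rcases eq_or_ne m u with rfl | hne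
    · exact h2 hu2
    · exact hM.1 m hm u huM ((hadj m u).mpr (Or.inl ⟨(hpart m).mpr h2, hu2⟩))
  have hV2ind : Indep G V2 := by
    intro a ha b hb hab
    rcases (hadj a b).mp hab with ⟨ha1, _⟩ | ⟨_, hb1⟩
    · exact (hpart a).mp ha1 ha
    · exact (hpart b).mp hb1 hb
  have hV2M : V2 = M := hM.2 V2 hV2ind hMV2
  have hxune : x ≠ u := G.ne_of_adj hxu
  obtain ⟨z, hxz⟩ := connected_first_edge hc hxune
  rcases (hadj x z).mp (hle hxz) with ⟨_, hz2⟩ | ⟨hx2, _⟩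
  · exact hS x hxS z (hMS (hV2M ▸ hz2)) hxz
  · exact (hpart x).mp hx1 hx2

lemma cb_robust (hconn : G.Connected) {V1 V2 : Set V}
    (hpart : ∀ w, w ∈ V1 ↔ w ∉ V2)
    (hadj : ∀ u w, G.Adj u w ↔ ((u ∈ V1 ∧ w ∈ V2) ∨ (u ∈ V2 ∧ w ∈ V1)))
    {M : Set V} (hM : IsMIS G M) : RobustMIS G M := by
  intro H hle hc
  refine ⟨indep_mono hle hM.1, ?_⟩
  intro S hS hMS
  by_contra hne
  obtain ⟨x, hxS, hxM⟩ : ∃ x ∈ S, x ∉ M := by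
    by_contra h
    push_neg at h
    exact hne (Set.Subset.antisymm h hMS)
  obtain ⟨u, huM, hxu⟩ := mis_dominates G hM hxM
  rcases (hadj x u).mp hxu with ⟨hx1, hu2⟩ | ⟨hx2, hu1⟩
  · exact cb_aux G hle hc hpart hadj hM hS hMS hxS hxM huM hxu hx1 hu2
  · refine cb_aux G hle hc (V1 := V2) (V2 := V1) ?_ ?_ hM hS hMS hxS hxM huM hxu hx2 hu1
    · intro w
      constructor
      · intro h2 h1
        exact (hpart w).mp h1 h2
      · intro h1
        by_contra h2
        exact h1 ((hpart w).mpr h2)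
    · intro a b
      rw [hadj a b, or_comm]

end Backward

section Forward
variable (G : SimpleGraph V)

lemma walk_pred (G : SimpleGraph V) (P : V → Prop)
    (hstep : ∀ x b, G.Adj x b → P b → P x) :
    ∀ {x y : V}, G.Walk x y → P y → P x := by
  intro x y p
  induction p with
  | nil => exact id
  | cons h q ih => exact fun hy => hstep _ _ h (ih hy)

lemma forward_cb (hrob : ∀ M : Set V, IsMIS G M → RobustMIS G M) (hconn : G.Connected)
    {v : V} (hcyc : OnCycle G v) (hnp : ∀ w, G.Adj v w → ¬ Pendant G w) :
    ∃ V1 V2 : Set V, (∀ w, w ∈ V1 ↔ w ∉ V2) ∧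
      (∀ u w, G.Adj u w ↔ ((u ∈ V1 ∧ w ∈ V2) ∨ (u ∈ V2 ∧ w ∈ V1))) := by
  classical
  set Gv := Gm G v with hGvdef
  set cmp : V → Gv.ConnectedComponent := Gv.connectedComponentMk with hcmpdef
  -- every neighbor of v has a neighbor other than v
  have hext : ∀ a, G.Adj v a → ∃ t, G.Adj a t ∧ t ≠ v := by
    intro a ha
    by_contra h
    push_neg at h
    exact hnp a ha ⟨v, ha.symm, fun z hz => by
      by_contra hzv
      exact hzv (h z hz)⟩
  have hane : ∀ a, G.Adj v a → a ≠ v := fun a ha h => G.loopless.irrefl v (h ▸ ha)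
  have hGvadj : ∀ {x y}, G.Adj x y → x ≠ v → y ≠ v → Gv.Adj x y :=
    fun h hx hy => ⟨h, hx, hy⟩
  have hcmp_adj : ∀ {x y}, G.Adj x y → x ≠ v → y ≠ v → cmp x = cmp y :=
    fun h hx hy => ConnectedComponent.sound (hGvadj h hx hy).reachable
  have hcmp_reach : ∀ {x y}, cmp x = cmp y → Gv.Reachable x y :=
    fun h => ConnectedComponent.exact h
  have hreach_cmp : ∀ {x y}, Gv.Reachable x y → cmp x = cmp y :=
    fun h => ConnectedComponent.sound h
  -- canonical A-vertex of a component, and its non-v neighbor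
  set pick0 : Gv.ConnectedComponent → V :=
    fun c => if h : ∃ b, G.Adj v b ∧ cmp b = c then h.choose else v with hpick0
  set wit0 : Gv.ConnectedComponent → V :=
    fun c => if h : ∃ t, G.Adj (pick0 c) t ∧ t ≠ v then h.choose else v with hwit0
  set pick : V → V := fun a => pick0 (cmp a) with hpickdef
  set wit : V → V := fun a => wit0 (cmp a) with hwitdef
  have hpickP : ∀ a, G.Adj v a → G.Adj v (pick a) ∧ cmp (pick a) = cmp a := by
    intro a ha
    have h : ∃ b, G.Adj v b ∧ cmp b = cmp a := ⟨a, ha, rfl⟩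
    have : pick a = h.choose := by
      rw [hpickdef]; simp only [hpick0]; rw [dif_pos h]
    rw [this]
    exact ⟨h.choose_spec.1, h.choose_spec.2⟩
  have hwitP : ∀ a, G.Adj v a → G.Adj (pick a) (wit a) ∧ wit a ≠ v := by
    intro a ha
    have h : ∃ t, G.Adj (pick0 (cmp a)) t ∧ t ≠ v := hext _ (hpickP a ha).1
    have : wit a = h.choose := by
      rw [hwitdef]; simp only [hwit0]; rw [dif_pos h]
    rw [this]
    exact h.choose_spec
  have hconstp : ∀ {a b}, cmp a = cmp b → pick a = pick b := by
    intro a b h; rw [hpickdef]; simp only; rw [h]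
  have hconstw : ∀ {a b}, cmp a = cmp b → wit a = wit b := by
    intro a b h; rw [hwitdef]; simp only; rw [h]
  have hcmpw : ∀ a, G.Adj v a → cmp (wit a) = cmp a := by
    intro a ha
    have h1 := (hpickP a ha)
    have h2 := (hwitP a ha)
    have : cmp (pick a) = cmp (wit a) :=
      hcmp_adj h2.1 (hane _ h1.1) h2.2
    rw [← this, h1.2]
  -- generic violation-at-v machine
  have key : ∀ (c₀ : Gv.ConnectedComponent) (T₀ X₀ : Set V),
      Indep G T₀ →
      (∀ t ∈ T₀, t ≠ v ∧ cmp t = c₀) →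
      (∀ x ∈ X₀, x ∉ T₀) →
      v ∈ X₀ →
      (∀ x ∈ X₀, x = v ∨ cmp x = c₀) →
      (∀ x ∈ X₀, ∃ t ∈ T₀, G.Adj x t) →
      (∃ x₀ ∈ X₀, G.Adj v x₀ ∧ cmp x₀ = c₀) →
      False := by
    intro c₀ T₀ X₀ hT₀ind hT₀e hdisj hvX hX₀e hdomX hx₀
    obtain ⟨x₀, hx₀X, hx₀adj, hx₀cmp⟩ := hx₀
    set X : Set V := X₀ ∪ {x | ∃ b, G.Adj v b ∧ cmp b ≠ c₀ ∧ x = pick b} with hX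
    set T : Set V := T₀ ∪ {t | ∃ b, G.Adj v b ∧ cmp b ≠ c₀ ∧ t = wit b} with hT
    refine master G hrob hconn T X ?_ ?_ ?_ (y := v) (Or.inl hvX) ?_
    · -- T independent
      intro t1 ht1 t2 ht2 hadj12
      rcases ht1 with ht1 | ⟨b, hb, hbne, hbeq⟩ <;>
        rcases ht2 with ht2 | ⟨c, hc, hcne, hceq⟩
      · exact hT₀ind t1 ht1 t2 ht2 hadj12
      · rw [hceq] at hadj12
        have h1 : cmp t1 = cmp (wit c) :=
          hcmp_adj hadj12 (hT₀e t1 ht1).1 (hwitP c hc).2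
        rw [hcmpw c hc, (hT₀e t1 ht1).2] at h1
        exact hcne h1.symm
      · rw [hbeq] at hadj12
        have h1 : cmp (wit b) = cmp t2 :=
          hcmp_adj hadj12 (hwitP b hb).2 (hT₀e t2 ht2).1
        rw [hcmpw b hb, (hT₀e t2 ht2).2] at h1
        exact hbne h1
      · rw [hbeq, hceq] at hadj12
        have h1 : cmp (wit b) = cmp (wit c) :=
          hcmp_adj hadj12 (hwitP b hb).2 (hwitP c hc).2
        rw [hcmpw b hb, hcmpw c hc] at h1
        rw [hconstw h1] at hadj12
        exact G.loopless.irrefl _ hadj12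
    · -- X ∩ T = ∅
      intro x hx hxT
      rcases hx with hx | ⟨b, hb, hbne, hbeq⟩ <;>
        rcases hxT with hxT | ⟨c, hc, hcne, hceq⟩
      · exact hdisj x hx hxT
      · rcases hX₀e x hx with rfl | hcx
        · exact (hwitP c hc).2 hceq.symm
        · rw [hceq, hcmpw c hc] at hcx
          exact hcne hcx
      · rw [hbeq] at hxT
        have h1 := (hT₀e _ hxT).2
        rw [(hpickP b hb).2] at h1
        exact hbne h1
      · rw [hbeq] at hceq
        have h1 : cmp (pick b) = cmp (wit c) := by rw [hceq]
        rw [(hpickP b hb).2, hcmpw c hc] at h1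
        have h2 := hconstp h1
        have h3 : pick c = wit c := by rw [← h2, hceq]
        have h4 := (hwitP c hc).1
        rw [← h3] at h4
        exact G.loopless.irrefl _ h4
    · -- domination
      intro x hx
      rcases hx with hx | ⟨b, hb, hbne, hbeq⟩
      · obtain ⟨t, htT, hadj⟩ := hdomX x hx
        exact ⟨t, Or.inl htT, hadj⟩
      · refine ⟨wit b, Or.inr ⟨b, hb, hbne, rfl⟩, ?_⟩
        rw [hbeq]
        exact (hwitP b hb).1
    · -- hK
      intro b hb
      by_cases hcb : cmp b = c₀
      · exact ⟨x₀, hx₀adj, Or.inl hx₀X, hcmp_reach (hcb.trans hx₀cmp.symm)⟩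
      · exact ⟨pick b, (hpickP b hb).1, Or.inr ⟨b, hb, hcb, rfl⟩,
          hcmp_reach ((hpickP b hb).2).symm⟩
  -- STEP 1 : N(v) is independent
  have hA : ∀ a b, G.Adj v a → G.Adj v b → ¬ G.Adj a b := by
    intro a10 a20 h10 h20 hadj
    have hcmp12 : cmp a10 = cmp a20 := hcmp_adj hadj (hane _ h10) (hane _ h20)
    refine key (cmp a10) {a20} {v, a10} ?_ ?_ ?_ (Or.inl rfl) ?_ ?_
      ⟨a10, Or.inr rfl, h10, rfl⟩
    · intro t1 ht1 t2 ht2 hadj12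
      rw [Set.mem_singleton_iff] at ht1 ht2
      rw [ht1, ht2] at hadj12
      exact G.loopless.irrefl _ hadj12
    · intro t ht
      rw [Set.mem_singleton_iff] at ht
      rw [ht]
      exact ⟨hane _ h20, hcmp12.symm⟩
    · intro x hx ht
      rw [Set.mem_singleton_iff] at ht
      rcases hx with rfl | hx
      · exact hane _ h20 ht.symm
      · rw [Set.mem_singleton_iff] at hx
        rw [← hx, ht] at hadj
        exact G.loopless.irrefl _ hadj
    · intro x hx
      rcases hx with rfl | hx
      · exact Or.inl rfl
      · rw [Set.mem_singleton_iff] at hx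
        exact Or.inr (by rw [hx])
    · intro x hx
      rcases hx with rfl | hx
      · exact ⟨a20, rfl, h20⟩
      · rw [Set.mem_singleton_iff] at hx
        exact ⟨a20, rfl, by rw [hx]; exact hadj⟩
  -- STEP 2 : nested neighborhoods within a component
  have hO : ∀ a α t, G.Adj v a → G.Adj v α → a ≠ α → cmp a = cmp α →
      G.Adj a t → t ≠ v → G.Adj α t := by
    intro a α t ha hα hne hcc hat htv
    by_contra hnadj
    have hcmpt : cmp t = cmp a := (hcmp_adj hat (hane _ ha) htv).symm
    refine key (cmp a) {α, t} {v, a} ?_ ?_ ?_ (Or.inl rfl) ?_ ?_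
      ⟨a, Or.inr rfl, ha, rfl⟩
    · intro t1 ht1 t2 ht2 hadj12
      rcases ht1 with rfl | ht1 <;> rcases ht2 with rfl | ht2
      · exact G.loopless.irrefl _ hadj12
      · rw [Set.mem_singleton_iff] at ht2
        rw [ht2] at hadj12
        exact hnadj hadj12
      · rw [Set.mem_singleton_iff] at ht1
        rw [ht1] at hadj12
        exact hnadj hadj12.symm
      · rw [Set.mem_singleton_iff] at ht1 ht2
        rw [ht1, ht2] at hadj12
        exact G.loopless.irrefl _ hadj12
    · intro s hs
      rcases hs with rfl | hs
      · exact ⟨hane _ hα, hcc.symm⟩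
      · rw [Set.mem_singleton_iff] at hs
        rw [hs]
        exact ⟨htv, hcmpt⟩
    · intro x hx hxT
      rcases hx with rfl | hx <;> rcases hxT with hxT | hxT
      · exact hane _ hα hxT.symm
      · rw [Set.mem_singleton_iff] at hxT
        exact htv hxT.symm
      · rw [Set.mem_singleton_iff] at hx
        exact hne (hx.symm.trans hxT)
      · rw [Set.mem_singleton_iff] at hx hxT
        rw [← (hx.symm.trans hxT)] at hat
        exact G.loopless.irrefl _ hat
    · intro x hx
      rcases hx with rfl | hx
      · exact Or.inl rfl
      · rw [Set.mem_singleton_iff] at hx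
        exact Or.inr (by rw [hx])
    · intro x hx
      rcases hx with rfl | hx
      · exact ⟨α, Or.inl rfl, hα⟩
      · rw [Set.mem_singleton_iff] at hx
        exact ⟨t, Or.inr rfl, by rw [hx]; exact hat⟩
  -- the cycle provides two distinct neighbors of v in one component
  obtain ⟨p, hp⟩ := hcyc
  obtain ⟨a₁, a₂, h1, h2, hne12, hreach12⟩ := cycle_nbrs G p hp
  have hcc12 : cmp a₁ = cmp a₂ := hreach_cmp hreach12
  have hsame : ∀ a t, G.Adj v a → cmp a = cmp a₁ → G.Adj a₁ t → t ≠ v → G.Adj a t := by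
    intro a t ha hc hat htv
    rcases eq_or_ne a₁ a with rfl | hne
    · exact hat
    · exact hO a₁ a t h1 ha hne hc.symm hat htv
  have hsame' : ∀ a t, G.Adj v a → cmp a = cmp a₁ → G.Adj a t → t ≠ v → G.Adj a₁ t := by
    intro a t ha hc hat htv
    rcases eq_or_ne a a₁ with rfl | hne
    · exact hat
    · exact hO a a₁ t ha h1 hne hc hat htv
  have hpartner : ∀ a, G.Adj v a → cmp a = cmp a₁ →
      ∃ a', G.Adj v a' ∧ a' ≠ a ∧ cmp a' = cmp a₁ := by
    intro a ha hc
    rcases eq_or_ne a a₁ with rfl | hne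
    · exact ⟨a₂, h2, fun h => hne12 h.symm, hcc12.symm⟩
    · exact ⟨a₁, h1, fun h => hne h.symm, rfl⟩
  -- STEP 3 : forced domination
  have hS3 : ∀ a, G.Adj v a → cmp a = cmp a₁ → ∀ M, IsMIS G M → a ∉ M →
      ∀ t, G.Adj a t → t ∈ M := by
    intro a ha hc M hM haM t₀ hat₀
    by_contra ht₀M
    obtain ⟨a', ha', hne', hc'⟩ := hpartner a ha hc
    have hnbr : ∀ b, G.Adj a b → b = v ∨ (G.Adj a' b ∧ b ≠ v) := by
      intro b hb
      rcases eq_or_ne b v with rfl | hbv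
      · exact Or.inl rfl
      · exact Or.inr ⟨hsame a' b ha' hc' (hsame' a b ha hc hb hbv) hbv, hbv⟩
    have hhub : ∀ b, G.Adj a b → (Gm G a).Reachable b v := by
      intro b hb
      rcases hnbr b hb with rfl | ⟨hb', hbv⟩
      · exact Reachable.refl _
      · have e1 : (Gm G a).Adj b a' := ⟨hb'.symm, (G.ne_of_adj hb).symm, hne'⟩
        have e2 : (Gm G a).Adj a' v := ⟨ha'.symm, hne', Ne.symm (hane a ha)⟩
        exact e1.reachable.trans e2.reachable
    exact viol G hrob hconn hM haM
      (fun b hb => ⟨t₀, hat₀, ht₀M, (hhub b hb).trans (hhub t₀ hat₀).symm⟩)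
  -- STEP 4 : R := N(a₁) \ {v} is independent
  have hRind : ∀ r r', G.Adj a₁ r → r ≠ v → G.Adj a₁ r' → ¬G.Adj r r' := by
    intro r r' h1r hrv h1r' hadj
    have hsing : Indep G {r} := by
      intro x hx y hy h
      rw [Set.mem_singleton_iff] at hx hy
      rw [hx, hy] at h
      exact G.loopless.irrefl _ h
    obtain ⟨M, hM, hsub⟩ := exists_mis G {r} hsing
    have hrM : r ∈ M := hsub rfl
    have ha₁M : a₁ ∉ M := fun h => hM.1 a₁ h r hrM h1r
    have hr'M := hS3 a₁ h1 rfl M hM ha₁M r' h1r'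
    exact hM.1 r hrM r' hr'M hadj
  -- STEP 5 : every neighbor of v lies in the component of a₁
  have hAcomp : ∀ a, G.Adj v a → cmp a = cmp a₁ := by
    intro a ha
    by_contra hnc
    obtain ⟨r₀, h1r₀, hr₀v⟩ := hext a₁ h1
    have hcr₀ : cmp a₁ = cmp r₀ := hcmp_adj h1r₀ (hane _ h1) hr₀v
    have hT : Indep G {r₀, a} := by
      intro x hx y hy hxy
      have hadjra : ¬ G.Adj r₀ a := by
        intro had
        have := hcmp_adj had hr₀v (hane _ ha)
        exact hnc (this.symm.trans hcr₀.symm)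
      rcases hx with rfl | hx <;> rcases hy with rfl | hy
      · exact G.loopless.irrefl _ hxy
      · rw [Set.mem_singleton_iff] at hy
        rw [hy] at hxy
        exact hadjra hxy
      · rw [Set.mem_singleton_iff] at hx
        rw [hx] at hxy
        exact hadjra hxy.symm
      · rw [Set.mem_singleton_iff] at hx hy
        rw [hx, hy] at hxy
        exact G.loopless.irrefl _ hxy
    obtain ⟨M, hM, hsub⟩ := exists_mis G {r₀, a} hT
    have hr₀M : r₀ ∈ M := hsub (Or.inl rfl)
    have haM : a ∈ M := hsub (Or.inr rfl)
    have ha₁M : a₁ ∉ M := fun h => hM.1 a₁ h r₀ hr₀M h1r₀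
    have hvM := hS3 a₁ h1 rfl M hM ha₁M v h1.symm
    exact hM.1 v hvM a haM ha
  -- STEP 6 : vertices adjacent to R are v or neighbors of v
  have hclosed : ∀ u r, G.Adj a₁ r → r ≠ v → G.Adj u r → u = v ∨ G.Adj v u := by
    intro u r h1r hrv hur
    by_contra hcc
    push_neg at hcc
    obtain ⟨huv, hnvu⟩ := hcc
    have hT : Indep G {v, u} := by
      intro x hx y hy hxy
      rcases hx with rfl | hx <;> rcases hy with rfl | hy
      · exact G.loopless.irrefl _ hxy
      · rw [Set.mem_singleton_iff] at hy
        rw [hy] at hxy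
        exact hnvu hxy
      · rw [Set.mem_singleton_iff] at hx
        rw [hx] at hxy
        exact hnvu hxy.symm
      · rw [Set.mem_singleton_iff] at hx hy
        rw [hx, hy] at hxy
        exact G.loopless.irrefl _ hxy
    obtain ⟨M, hM, hsub⟩ := exists_mis G {v, u} hT
    have hvM : v ∈ M := hsub (Or.inl rfl)
    have huM : u ∈ M := hsub (Or.inr rfl)
    have ha₁M : a₁ ∉ M := fun h => hM.1 v hvM a₁ h h1
    have hrM := hS3 a₁ h1 rfl M hM ha₁M r h1r
    exact hM.1 u huM r hrM hur
  -- STEP 7 : trichotomy of vertices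
  have htri : ∀ x, x = v ∨ G.Adj v x ∨ (G.Adj a₁ x ∧ x ≠ v) := by
    intro x
    obtain ⟨p'⟩ := hconn.preconnected x v
    refine walk_pred G (fun z => z = v ∨ G.Adj v z ∨ (G.Adj a₁ z ∧ z ≠ v))
      ?_ p' (Or.inl rfl)
    intro x' b' h hb
    rcases hb with rfl | hb | ⟨hb1, hbv⟩
    · exact Or.inr (Or.inl h.symm)
    · rcases eq_or_ne x' v with rfl | hxv
      · exact Or.inl rfl
      · exact Or.inr (Or.inr ⟨hsame' b' x' hb (hAcomp b' hb) h.symm hxv, hxv⟩)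
    · rcases hclosed x' b' hb1 hbv h with h' | h'
      · exact Or.inl h'
      · exact Or.inr (Or.inl h')
  have hRnotA : ∀ x, G.Adj a₁ x → x ≠ v → ¬G.Adj v x := by
    intro x h1x hxv hvx
    exact hA a₁ x h1 hvx h1x
  -- assemble the complete bipartition
  refine ⟨{x | x = v ∨ (G.Adj a₁ x ∧ x ≠ v)}, {x | G.Adj v x}, ?_, ?_⟩
  · intro w
    constructor
    · rintro (rfl | ⟨h1w, hwv⟩)
      · exact fun h => G.loopless.irrefl _ h
      · exact hRnotA w h1w hwv
    · intro hw
      rcases htri w with h | h | h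
      · exact Or.inl h
      · exact absurd h hw
      · exact Or.inr h
  · intro u w
    constructor
    · intro huw
      rcases htri u with rfl | hu | hu
      · exact Or.inl ⟨Or.inl rfl, huw⟩
      · right
        refine ⟨hu, ?_⟩
        rcases eq_or_ne w v with rfl | hwv
        · exact Or.inl rfl
        · exact Or.inr ⟨hsame' u w hu (hAcomp u hu) huw hwv, hwv⟩
      · rcases hclosed w u hu.1 hu.2 huw.symm with rfl | hw
        · exact absurd huw.symm (hRnotA u hu.1 hu.2)
        · exact Or.inl ⟨Or.inr hu, hw⟩
    · rintro (⟨hu1, hw2⟩ | ⟨hu2, hw1⟩)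
      · rcases hu1 with rfl | ⟨h1u, huv⟩
        · exact hw2
        · exact (hsame w u hw2 (hAcomp w hw2) h1u huv).symm
      · rcases hw1 with rfl | ⟨h1w, hwv⟩
        · exact hu2.symm
        · exact hsame u w hu2 (hAcomp u hu2) h1w hwv

end Forward

theorem stmt_8 (G : SimpleGraph V) (hconn : G.Connected) :
    (∀ M : Set V, IsMIS G M → RobustMIS G M) ↔
      (IsCompleteBipartite G ∨ Sputnik G) := by
  constructor
  · intro hrob
    by_cases hsp : Sputnik G
    · exact Or.inr hsp
    · left
      rw [Sputnik] at hsp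
      push_neg at hsp
      obtain ⟨v, hcyc, hnp⟩ := hsp
      have hnp' : ∀ w, G.Adj v w → ¬ Pendant G w := by
        intro w hw hpend
        exact hnp ⟨w, hw, hpend⟩
      obtain ⟨V1, V2, h1, h2⟩ := forward_cb G hrob hconn hcyc hnp'
      exact ⟨V1, V2, h1, h2⟩
  · rintro (⟨V1, V2, hpart, hadj⟩ | hsp) M hM
    · exact cb_robust G hconn hpart hadj hM
    · exact sputnik_robust G hconn hsp hM
end

section
/- Every connected bipartite graph admits a robust maximal independent set; specifically, one side of the bipartition is a maximal independent set in every connected spanning subgraph. -/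
open SimpleGraph

variable {V : Type*}

theorem stmt_9 (G : SimpleGraph V) (hconn : G.Connected) (V1 V2 : Set V)
    (hpart : ∀ v, v ∈ V1 ↔ v ∉ V2)
    (hbip : ∀ u v, G.Adj u v → ((u ∈ V1 ∧ v ∈ V2) ∨ (u ∈ V2 ∧ v ∈ V1))) :
    ∃ M : Set V, (M = V1 ∨ M = V2) ∧ IsMIS G M ∧ RobustMIS G M := by
  by_cases hsub : ∀ a b : V, a = b
  · -- at most one vertex
    obtain ⟨v⟩ := hconn.nonempty
    have hnoadj : ∀ (H : SimpleGraph V) (a b : V), ¬ H.Adj a b := by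
      intro H a b hab
      exact H.ne_of_adj hab (hsub a b)
    by_cases hv : v ∈ V1
    · refine ⟨V1, Or.inl rfl, ?_, ?_⟩
      · refine ⟨fun a _ b _ => hnoadj G a b, fun S _ hMS => ?_⟩
        apply Set.Subset.antisymm _ hMS
        intro x _
        have : x = v := hsub x v
        rwa [this]
      · intro H _ _
        refine ⟨fun a _ b _ => hnoadj H a b, fun S _ hMS => ?_⟩
        apply Set.Subset.antisymm _ hMS
        intro x _
        have : x = v := hsub x v
        rwa [this]
    · have hv2 : v ∈ V2 := by
        by_contra h; exact hv ((hpart v).mpr h)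
      refine ⟨V2, Or.inr rfl, ?_, ?_⟩
      · refine ⟨fun a _ b _ => hnoadj G a b, fun S _ hMS => ?_⟩
        apply Set.Subset.antisymm _ hMS
        intro x _
        have : x = v := hsub x v
        rwa [this]
      · intro H _ _
        refine ⟨fun a _ b _ => hnoadj H a b, fun S _ hMS => ?_⟩
        apply Set.Subset.antisymm _ hMS
        intro x _
        have : x = v := hsub x v
        rwa [this]
  · -- at least two vertices
    push_neg at hsub
    obtain ⟨a, b, hab⟩ := hsub
    have key : ∀ H : SimpleGraph V, H ≤ G → H.Connected → IsMIS H V1 := by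
      intro H hHG hHconn
      have hindep : Indep H V1 := by
        intro u hu w hw hadj
        rcases hbip u w (hHG hadj) with ⟨_, hw2⟩ | ⟨hu2, _⟩
        · exact (hpart w).mp hw hw2
        · exact (hpart u).mp hu hu2
      refine ⟨hindep, fun S hS hMS => ?_⟩
      apply Set.Subset.antisymm _ hMS
      intro x hx
      by_contra hx1
      have hx2 : x ∈ V2 := by
        by_contra h; exact hx1 ((hpart x).mpr h)
      -- x has a neighbor in H
      have : ∃ w, H.Adj x w := by
        rcases eq_or_ne x a with rfl | hxa
        · obtain ⟨p⟩ := hHconn.preconnected x b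
          cases p with
          | nil => exact absurd rfl hab
          | cons h _ => exact ⟨_, h⟩
        · obtain ⟨p⟩ := hHconn.preconnected x a
          cases p with
          | nil => exact absurd rfl hxa
          | cons h _ => exact ⟨_, h⟩
      obtain ⟨w, hw⟩ := this
      have hw1 : w ∈ V1 := by
        rcases hbip x w (hHG hw) with ⟨hx1', _⟩ | ⟨_, hw1⟩
        · exact absurd hx1' hx1
        · exact hw1
      exact hS x hx w (hMS hw1) hw
    exact ⟨V1, Or.inl rfl, key G le_rfl hconn, key⟩
end

section
/- A biconnected graph that is not bipartite admits no robust maximal independent set. -/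
open SimpleGraph

variable {V : Type*}

theorem stmt_11 (G : SimpleGraph V) (hbc : Biconnected G)
    (hnb : ¬ G.Colorable 2) :
    ¬ ∃ M : Set V, IsMIS G M ∧ RobustMIS G M := by
  classical
  rintro ⟨M, hMIS, hrob⟩
  -- Step 1: there is an edge with both endpoints outside M
  have hedge : ∃ u v, G.Adj u v ∧ u ∉ M ∧ v ∉ M := by
    by_contra h
    push_neg at h
    apply hnb
    refine ⟨SimpleGraph.Coloring.mk (fun x => if x ∈ M then (0 : Fin 2) else 1) ?_⟩
    intro a b hab
    have hind := hMIS.1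
    by_cases haM : a ∈ M
    · have hbM : b ∉ M := fun hbM => hind a haM b hbM hab
      simp [haM, hbM]
    · have hbM : b ∈ M := by
        rcases h a b hab haM with hb
        exact hb
      simp [haM, hbM]
  obtain ⟨u, v, huv, huM, hvM⟩ := hedge
  have hune : u ≠ v := G.ne_of_adj huv
  -- Step 2: the spanning subgraph where v keeps only the edge to u
  set H : SimpleGraph V :=
    { Adj := fun a b => G.Adj a b ∧ (a = v → b = u) ∧ (b = v → a = u)
      symm := by
        constructor
        rintro a b ⟨h1, h2, h3⟩
        exact ⟨h1.symm, h3, h2⟩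
      loopless := by
        constructor
        rintro a ⟨h1, _, _⟩
        exact G.loopless.irrefl a h1 } with hHdef
  have hle : H ≤ G := fun a b h => h.1
  have hHvu : H.Adj v u := ⟨huv.symm, fun _ => rfl, fun h => absurd h.symm (Ne.symm hune)⟩
  -- Step 3: H is connected
  have hconn : H.Connected := by
    have hNE : Nonempty V := by
      have h3 := hbc.1
      have : Nat.card V ≠ 0 := by omega
      exact (Nat.card_ne_zero.mp this).1
    refine SimpleGraph.Connected.mk ?_
    have hreach : ∀ a b : V, a ≠ v → b ≠ v → H.Reachable a b := by
      intro a b ha hb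
      have := (hbc.2 v).preconnected ⟨a, ha⟩ ⟨b, hb⟩
      exact this.map
        ((⟨Subtype.val, fun {x y} hab =>
          ⟨hab, fun h => absurd h x.prop, fun h => absurd h y.prop⟩⟩ :
            (G.induce {x | x ≠ v}) →g H))
    intro a b
    by_cases ha : a = v
    · by_cases hb : b = v
      · subst ha; subst hb; exact SimpleGraph.Reachable.refl _
      · subst ha
        exact (hHvu.reachable).trans (hreach u b hune hb)
    · by_cases hb : b = v
      · subst hb
        exact (hreach a u ha hune).trans hHvu.reachable.symm
      · exact hreach a b ha hb
  -- Step 4: M ∪ {v} is independent in H, contradicting maximality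
  have hIsMIS := hrob H hle hconn
  have hindep : Indep H (M ∪ {v}) := by
    rintro a (haM | ha) b (hbM | hb) hadj
    · exact hMIS.1 a haM b hbM (hle hadj)
    · rcases hb with rfl
      have : a = u := hadj.2.2 rfl
      subst this
      exact huM haM
    · rcases ha with rfl
      have : b = u := hadj.2.1 rfl
      subst this
      exact huM hbM
    · rcases ha with rfl; rcases hb with rfl
      exact H.loopless.irrefl _ hadj
  have := hIsMIS.2 (M ∪ {v}) hindep Set.subset_union_left
  have hvmem : v ∈ M := by
    rw [← this]
    exact Or.inr rfl
  exact hvM hvmem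
end

section
/- A biconnected graph admits a robust maximal independent set if and only if it is bipartite. -/
open SimpleGraph

variable {V : Type*}

section Aux

open Classical in
private lemma aux_exists_ne_ne (hV : 3 ≤ Nat.card V) (x y : V) :
    ∃ w : V, w ≠ x ∧ w ≠ y := by
  have hfin : Finite V := by
    by_contra h
    rw [not_finite_iff_infinite] at h
    simp [Nat.card_eq_zero_of_infinite] at hV
  cases nonempty_fintype V
  rw [Nat.card_eq_fintype_card] at hV
  by_contra h
  push_neg at h
  have hsub : (Finset.univ : Finset V) ⊆ {x, y} := by
    intro w _
    by_cases h1 : w = x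
    · simp [h1]
    · simp [h w h1]
  have := Finset.card_le_card hsub
  have h2 : ({x, y} : Finset V).card ≤ 2 := by
    refine le_trans (Finset.card_insert_le _ _) ?_
    simp
  simp [Finset.card_univ] at this
  omega

private lemma aux_fin2 (a : Fin 2) : a = 0 ∨ a = 1 := by
  fin_cases a
  · exact Or.inl rfl
  · exact Or.inr rfl

private lemma aux_exists_adj (H : SimpleGraph V) (hH : H.Connected)
    (hV : 3 ≤ Nat.card V) (x : V) : ∃ y, H.Adj x y := by
  obtain ⟨y, hy, -⟩ := aux_exists_ne_ne hV x x
  obtain ⟨p⟩ := hH.preconnected x y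
  cases p with
  | nil => exact absurd rfl hy.symm
  | cons h q => exact ⟨_, h⟩

private lemma aux_bc_connected (G : SimpleGraph V) (hbc : Biconnected G) :
    G.Connected := by
  obtain ⟨hV, hind⟩ := hbc
  have hne : Nonempty V := by
    have : 0 < Nat.card V := by omega
    exact (Nat.card_pos_iff.mp this).1
  haveI := hne
  refine ⟨fun u v => ?_⟩
  obtain ⟨w, hwu, hwv⟩ := aux_exists_ne_ne hV u v
  have hc := (hind w).preconnected ⟨u, hwu.symm⟩ ⟨v, hwv.symm⟩
  let f : (G.induce {z : V | z ≠ w}) →g G := ⟨Subtype.val, fun {a b} hab => hab⟩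
  exact hc.map f

end Aux

theorem stmt_12 (G : SimpleGraph V) (hbc : Biconnected G) :
    (∃ M : Set V, IsMIS G M ∧ RobustMIS G M) ↔ G.Colorable 2 := by
  classical
  have hV := hbc.1
  have hGconn := aux_bc_connected G hbc
  constructor
  · rintro ⟨M, hMIS, hrob⟩
    -- complement of M is independent
    have hcompl : ∀ u v, u ∉ M → v ∉ M → ¬ G.Adj u v := by
      intro u v hu hv hadj
      -- H : delete all edges from v to M
      set H : SimpleGraph V :=
        { Adj := fun a b => G.Adj a b ∧ ¬(a = v ∧ b ∈ M) ∧ ¬(b = v ∧ a ∈ M)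
          symm := ⟨by intro a b h; exact ⟨h.1.symm, h.2.2, h.2.1⟩⟩
          loopless := ⟨fun a h => G.loopless.irrefl a h.1⟩ } with hHdef
      have hle : H ≤ G := fun {a b} h => h.1
      have hvu : H.Adj v u := by
        refine ⟨hadj.symm, ?_, ?_⟩
        · rintro ⟨-, h⟩; exact hu h
        · rintro ⟨-, h⟩; exact hv h
      have huv : u ≠ v := (G.ne_of_adj hadj)
      have hreach : ∀ x : V, H.Reachable x u := by
        intro x
        by_cases hx : x = v
        · subst hx; exact hvu.reachable
        · have hc := (hbc.2 v).preconnected ⟨x, hx⟩ ⟨u, huv⟩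
          let f : (G.induce {z : V | z ≠ v}) →g H :=
            ⟨Subtype.val, fun {a b} hab =>
              ⟨hab, fun h => a.2 h.1, fun h => b.2 h.1⟩⟩
          exact hc.map f
      have hconn : H.Connected := by
        haveI := hGconn.nonempty
        exact ⟨fun a b => (hreach a).trans (hreach b).symm⟩
      obtain ⟨hHind, hHmax⟩ := hrob H hle hconn
      have hS : Indep H (M ∪ {v}) := by
        intro a ha b hb hab
        rcases ha with ha | ha
        · rcases hb with hb | hb
          · exact hHind a ha b hb hab
          · exact hab.2.2 ⟨hb, ha⟩
        · rcases hb with hb | hb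
          · exact hab.2.1 ⟨ha, hb⟩
          · rw [ha, hb] at hab; exact H.loopless.irrefl v hab
      have := hHmax (M ∪ {v}) hS (Set.subset_union_left)
      have hvM : v ∈ M := by rw [← this]; exact Or.inr rfl
      exact hv hvM
    -- build 2-coloring
    refine ⟨SimpleGraph.Coloring.mk (fun x => if x ∈ M then 0 else 1) ?_⟩
    intro a b hab
    by_cases ha : a ∈ M <;> by_cases hb : b ∈ M
    · exact absurd hab (hMIS.1 a ha b hb)
    · simp [ha, hb]
    · simp [ha, hb]
    · exact absurd hab (hcompl a b ha hb)
  · rintro ⟨c⟩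
    set M : Set V := {x | c x = 0} with hMdef
    have key : ∀ H : SimpleGraph V, H ≤ G → H.Connected → IsMIS H M := by
      intro H hle hconn
      have hind : Indep H M := by
        intro a ha b hb hab
        exact c.valid (hle hab) (by rw [Set.mem_setOf_eq.mp ha, Set.mem_setOf_eq.mp hb])
      refine ⟨hind, fun S hS hsub => ?_⟩
      refine Set.Subset.antisymm (fun x hx => ?_) hsub
      by_contra hxM
      obtain ⟨y, hxy⟩ := aux_exists_adj H hconn hV x
      have hyM : y ∈ M := by
        have h1 : c x ≠ c y := c.valid (hle hxy)
        have h0 : c x ≠ 0 := hxM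
        show c y = 0
        rcases aux_fin2 (c x) with hcx | hcx
        · exact absurd hcx h0
        · rcases aux_fin2 (c y) with hcy | hcy
          · exact hcy
          · rw [hcx, hcy] at h1; exact absurd rfl h1
      exact hS x hx y (hsub hyM) hxy
    exact ⟨M, key G le_rfl hGconn, key⟩
end

section
/- No odd cycle C_{2k+1} (k ≥ 1) admits a robust maximal independent set. -/
open SimpleGraph

variable {V : Type*}

open Fin.CommRing in
lemma aux_odd_cycle (m t : ℕ) (ht : m + 3 = 2 * t + 1) :
    ¬ ∃ M : Set (Fin (m + 3)),
      IsMIS (SimpleGraph.cycleGraph (m + 3)) M ∧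
      RobustMIS (SimpleGraph.cycleGraph (m + 3)) M := by
  rintro ⟨M, hMIS, hRob⟩
  have hval1 : (1 : Fin (m + 3)).val = 1 := by
    have : (1 : Fin (m + 3)) = ((1 : ℕ) : Fin (m + 3)) := by norm_cast
    rw [this, Fin.val_natCast, Nat.mod_eq_of_lt (by omega)]
  -- adjacency of consecutive vertices
  have hadj_succ : ∀ v : Fin (m + 3), (cycleGraph (m + 3)).Adj v (v + 1) := by
    intro v
    rw [cycleGraph_adj']
    right
    have : v + 1 - v = 1 := by ring
    rw [this, hval1]
  -- Step 1 : find u with u ∉ M and u+1 ∉ M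
  have hgap : ∃ u : Fin (m + 3), u ∉ M ∧ u + 1 ∉ M := by
    by_contra h
    push_neg at h
    have hstep : ∀ v : Fin (m + 3), v + 1 ∈ M ↔ v ∉ M := by
      intro v
      constructor
      · intro h1 hv
        exact hMIS.1 v hv (v + 1) h1 (hadj_succ v)
      · exact h v
    have h2 : ∀ v : Fin (m + 3), v ∈ M ↔ v + 2 ∈ M := by
      intro v
      have e : v + 2 = (v + 1) + 1 := by ring
      rw [e, hstep, hstep]
      tauto
    have heven : ∀ j : ℕ, ((2 * j : ℕ) : Fin (m + 3)) ∈ M ↔ (0 : Fin (m + 3)) ∈ M := by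
      intro j
      induction j with
      | zero => norm_num
      | succ j ih =>
        have e : ((2 * (j + 1) : ℕ) : Fin (m + 3)) = ((2 * j : ℕ) : Fin (m + 3)) + 2 := by
          push_cast; ring
        rw [e, ← h2]
        exact ih
    have hall : ∀ v : Fin (m + 3), v ∈ M ↔ (0 : Fin (m + 3)) ∈ M := by
      intro v
      have key : ((2 * ((t + 1) * v.val) : ℕ) : Fin (m + 3)) = v := by
        apply Fin.ext
        rw [Fin.val_natCast]
        have h1 : 2 * ((t + 1) * v.val) = v.val + (m + 3) * v.val := by
          rw [← Nat.mul_assoc]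
          have h2t : 2 * (t + 1) = (m + 3) + 1 := by omega
          rw [h2t, Nat.add_mul, Nat.one_mul, Nat.add_comm]
        rw [h1, Nat.add_mul_mod_self_left, Nat.mod_eq_of_lt v.isLt]
      rw [← key]
      exact heven _
    have h0 := hstep 0
    rw [hall (0 + 1)] at h0
    tauto
  obtain ⟨u, hu, hu1⟩ := hgap
  -- Step 2 : delete the edge {u-1, u}
  set H := (cycleGraph (m + 3)).deleteEdges {s(u - 1, u)} with hH
  have hle : H ≤ cycleGraph (m + 3) := deleteEdges_le _
  -- H is connected
  have hreach : ∀ j : ℕ, j ≤ m + 2 → H.Reachable u (u + (j : Fin (m + 3))) := by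
    intro j hj
    induction j with
    | zero => simpa using Reachable.refl u
    | succ j ih =>
      refine (ih (by omega)).trans (Adj.reachable ?_)
      have e : u + ((j + 1 : ℕ) : Fin (m + 3)) = (u + (j : Fin (m + 3))) + 1 := by
        push_cast; ring
      rw [e, hH, deleteEdges_adj]
      refine ⟨hadj_succ _, ?_⟩
      intro hmem
      rw [Set.mem_singleton_iff, Sym2.eq_iff] at hmem
      rcases hmem with ⟨h1, h2⟩ | ⟨h1, h2⟩
      · -- u + j = u - 1 and u + j + 1 = u
        have hz : ((j + 1 : ℕ) : Fin (m + 3)) = 0 := by push_cast; linear_combination h2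
        have := congrArg Fin.val hz
        rw [Fin.val_natCast, Nat.mod_eq_of_lt (by omega)] at this
        simp only [Fin.val_zero] at this
        omega
      · -- u + j = u and u + j + 1 = u - 1
        have hj0 : ((j : ℕ) : Fin (m + 3)) = 0 := by linear_combination h1
        have hjv := congrArg Fin.val hj0
        rw [Fin.val_natCast, Nat.mod_eq_of_lt (by omega)] at hjv
        simp only [Fin.val_zero] at hjv
        have hj0' : j = 0 := hjv
        subst hj0'
        simp only [Nat.cast_zero] at h2
        have h20 : (2 : Fin (m + 3)) = 0 := by linear_combination h2
        have hv := congrArg Fin.val h20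
        have hv2 : (2 : Fin (m + 3)) = ((2 : ℕ) : Fin (m + 3)) := by norm_cast
        rw [hv2, Fin.val_natCast, Nat.mod_eq_of_lt (by omega)] at hv
        simp at hv
  have hconn : H.Connected := by
    have key : ∀ v : Fin (m + 3), H.Reachable u v := by
      intro v
      have h := hreach (v - u).val (by have := (v - u).isLt; omega)
      rw [Fin.cast_val_eq_self] at h
      have e : u + (v - u) = v := by ring
      rwa [e] at h
    rw [connected_iff]
    exact ⟨fun v w => (key v).symm.trans (key w), ⟨u⟩⟩
  obtain ⟨hind, hmax⟩ := hRob H hle hconn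
  -- Step 3 : M ∪ {u} is independent in H
  have hub : ∀ b ∈ M, ¬ H.Adj u b := by
    intro b hb hadj
    rw [hH, deleteEdges_adj] at hadj
    obtain ⟨hG, hne⟩ := hadj
    rw [cycleGraph_adj'] at hG
    rcases hG with h1 | h1
    · -- (u - b).val = 1, so b = u - 1
      have hub1 : u - b = 1 := Fin.ext (by rw [h1, hval1])
      have hb1 : b = u - 1 := by linear_combination -hub1
      apply hne
      rw [hb1, Set.mem_singleton_iff, Sym2.eq_swap]
    · -- (b - u).val = 1, so b = u + 1
      have hub1 : b - u = 1 := Fin.ext (by rw [h1, hval1])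
      have hb1 : b = u + 1 := by linear_combination hub1
      rw [hb1] at hb
      exact hu1 hb
  have hSind : Indep H (insert u M) := by
    rintro a (rfl | ha) b (rfl | hb) hadj
    · exact hadj.ne rfl
    · exact hub b hb hadj
    · exact hub a ha hadj.symm
    · exact hind a ha b hb hadj
  have hins := hmax (insert u M) hSind (Set.subset_insert u M)
  exact hu (hins ▸ Set.mem_insert u M)

theorem stmt_16 (k : ℕ) (hk : 1 ≤ k) :
    ¬ ∃ M : Set (Fin (2 * k + 1)),
      IsMIS (SimpleGraph.cycleGraph (2 * k + 1)) M ∧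
      RobustMIS (SimpleGraph.cycleGraph (2 * k + 1)) M := by
  obtain ⟨m, hm⟩ : ∃ m, 2 * k + 1 = m + 3 := ⟨2 * k - 2, by omega⟩
  rw [hm]
  exact aux_odd_cycle m k (by omega)
end
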